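/- Let V be a finite set with |V| = n ≥ 2, let G be a simple graph on V in which every vertex has degree at most 2, let c be the number of connected components of G that contain a cycle (equivalently, components with as many edges as vertices), and let ε ≥ 0. If T is a spanning tree of the complete graph on V whose weight in the (1,2)-metric obtained from G is at most (1 + ε/2)·(2(n − 1) − (|E(G)| − c)), then the number of edges of G removed by T satisfies |E(G) \ E(T)| ≤ c + ε(n − 1). -/

import Mathlib

open SimpleGraph Finset
open scoped Classical

/-- The weight of the spanning tree `T` of the complete graph on `V` in the
`(1,2)`-metric obtained from `G` : each edge of `T` contributes `1` if it is an
edge of `G` and `2` otherwise. -/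
noncomputable def metricWeight {V : Type*} [Fintype V] (G T : SimpleGraph V) : ℕ :=
  ∑ e ∈ T.edgeFinset, if e ∈ G.edgeSet then 1 else 2

/-- The number of connected components of `G` that contain a cycle, i.e. whose induced
subgraph is not acyclic. -/
noncomputable def numCycleComponents {V : Type*} (G : SimpleGraph V) : ℕ :=
  Nat.card {K : G.ConnectedComponent // ¬ (G.induce K.supp).IsAcyclic}

/-- A non-acyclic graph has an edge. -/
lemma nonacyclic_adj {α : Type*} (H : SimpleGraph α) (h : ¬H.IsAcyclic) :
    ∃ a b, H.Adj a b := by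
  rw [IsAcyclic] at h
  push_neg at h
  obtain ⟨v, p, hp⟩ := h
  cases p with
  | nil => exact absurd hp Walk.IsCycle.not_of_nil
  | cons hadj q => exact ⟨_, _, hadj⟩

/-- The number of cycle components is at most the number of edges. -/
lemma cycle_comps_le {V : Type*} [Fintype V] (G : SimpleGraph V) :
    numCycleComponents G ≤ G.edgeFinset.card := by
  classical
  have key : ∀ K : {K : G.ConnectedComponent // ¬ (G.induce K.supp).IsAcyclic},
      ∃ e : G.edgeSet, ∃ a b : V, e.1 = s(a,b) ∧ a ∈ K.1.supp ∧ b ∈ K.1.supp := by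
    rintro ⟨K, hK⟩
    obtain ⟨a, b, hab⟩ := nonacyclic_adj _ hK
    have hab' : G.Adj a.1 b.1 := hab
    exact ⟨⟨s(a.1, b.1), hab'⟩, a.1, b.1, rfl, a.2, b.2⟩
  choose f a b hfe ha hb using key
  have hinj : Function.Injective f := by
    intro K₁ K₂ hf
    have he : (s(a K₁, b K₁) : Sym2 V) = s(a K₂, b K₂) := by
      rw [← hfe, ← hfe, hf]
    have ha2 : a K₂ ∈ K₁.1.supp := by
      rcases (Sym2.eq_iff.mp he) with ⟨h1, h2⟩ | ⟨h1, h2⟩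
      · rw [← h1]; exact ha K₁
      · rw [← h2]; exact hb K₁
    have : K₁.1 = K₂.1 := by
      rw [ConnectedComponent.mem_supp_iff] at ha2
      rw [← ha2]
      have := ha K₂
      rw [ConnectedComponent.mem_supp_iff] at this
      rw [this]
    exact Subtype.ext this
  calc numCycleComponents G ≤ Nat.card G.edgeSet := Nat.card_le_card_of_injective f hinj
    _ = G.edgeFinset.card := by
        rw [Nat.card_eq_fintype_card, ← Set.toFinset_card]
        congr 1

/-- The metric weight of `T` equals `|E(T)|` plus the number of edges of `T` not in `G`. -/
lemma weight_eq {V : Type*} [Fintype V] (G T : SimpleGraph V) :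
    metricWeight G T = T.edgeFinset.card + (T.edgeFinset \ G.edgeFinset).card := by
  classical
  rw [metricWeight]
  have : ∀ e ∈ T.edgeFinset, (if e ∈ G.edgeSet then 1 else 2)
      = 1 + (if e ∈ G.edgeFinset then 0 else 1) := by
    intro e _
    by_cases h : e ∈ G.edgeSet <;> simp [h, mem_edgeFinset]
  rw [Finset.sum_congr rfl this, Finset.sum_add_distrib, Finset.sum_const, smul_eq_mul,
    mul_one, Finset.sum_ite, Finset.sum_const, Finset.sum_const, smul_eq_mul, smul_eq_mul]
  simp [Finset.sdiff_eq_filter]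

/-- for a graph `G` on `n ≥ 2` vertices all of whose degrees are at most `2`,
letting `c` be the number of connected components containing a cycle and `ε ≥ 0`, any
spanning tree `T` of the complete graph whose weight in the `(1,2)`-metric obtained from
`G` is at most `(1 + ε/2)(2(n-1) - (|E(G)| - c))` removes at most `c + ε(n-1)` edges
of `G`. -/
theorem stmt_3 {V : Type*} [Fintype V] (n c : ℕ) (hn : 2 ≤ n)
    (hcard : Fintype.card V = n) (G : SimpleGraph V)
    (hdeg : ∀ v : V, G.degree v ≤ 2)
    (hc : numCycleComponents G = c)
    (ε : ℝ) (hε : 0 ≤ ε)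
    (T : SimpleGraph V) (hT : T.IsTree)
    (hw : (metricWeight G T : ℝ) ≤
      (1 + ε / 2) * (2 * ((n : ℝ) - 1) - ((G.edgeFinset.card : ℝ) - c))) :
    ((G.edgeFinset \ T.edgeFinset).card : ℝ) ≤ (c : ℝ) + ε * ((n : ℝ) - 1) := by
  classical
  have hA : T.edgeFinset.card = n - 1 := by have := hT.card_edgeFinset; omega
  have hBC : (T.edgeFinset \ G.edgeFinset).card + (T.edgeFinset ∩ G.edgeFinset).card
      = T.edgeFinset.card := Finset.card_sdiff_add_card_inter _ _
  have hrD : (G.edgeFinset \ T.edgeFinset).card + (G.edgeFinset ∩ T.edgeFinset).card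
      = G.edgeFinset.card := Finset.card_sdiff_add_card_inter _ _
  have hCD : (T.edgeFinset ∩ G.edgeFinset).card = (G.edgeFinset ∩ T.edgeFinset).card := by
    rw [Finset.inter_comm]
  have hcm : c ≤ G.edgeFinset.card := hc ▸ cycle_comps_le G
  have hwe := weight_eq G T
  -- real versions
  have hAr : (T.edgeFinset.card : ℝ) = (n : ℝ) - 1 := by
    rw [hA]; push_cast [Nat.cast_sub (by omega : 1 ≤ n)]; ring
  have hBCr : ((T.edgeFinset \ G.edgeFinset).card : ℝ)
      + ((T.edgeFinset ∩ G.edgeFinset).card : ℝ) = (T.edgeFinset.card : ℝ) := by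
    exact_mod_cast congrArg (Nat.cast : ℕ → ℝ) hBC
  have hrDr : ((G.edgeFinset \ T.edgeFinset).card : ℝ)
      + ((G.edgeFinset ∩ T.edgeFinset).card : ℝ) = (G.edgeFinset.card : ℝ) := by
    exact_mod_cast congrArg (Nat.cast : ℕ → ℝ) hrD
  have hCDr : ((T.edgeFinset ∩ G.edgeFinset).card : ℝ)
      = ((G.edgeFinset ∩ T.edgeFinset).card : ℝ) := by exact_mod_cast hCD
  have hcmr : (c : ℝ) ≤ (G.edgeFinset.card : ℝ) := by exact_mod_cast hcm
  have hwer : (metricWeight G T : ℝ) = (T.edgeFinset.card : ℝ)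
      + ((T.edgeFinset \ G.edgeFinset).card : ℝ) := by exact_mod_cast hwe
  rw [hwer, hAr] at hw
  nlinarith [mul_nonneg hε (sub_nonneg.mpr hcmr)]
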